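/- Let c ∈ ℂ with |c| ≤ 2. For every z ∈ ℂ, the orbit (f_c^n(z))ₙ is bounded if and only if |f_c^n(z)| ≤ 2 for all n ∈ ℕ. -/

import Mathlib

/-- The quadratic map with seed `c`. -/
noncomputable def fc (c : ℂ) : ℂ → ℂ := fun z => z ^ 2 + c

lemma fc_grow (c : ℂ) (hc : ‖c‖ ≤ 2) (w : ℂ) (hw : 2 < ‖w‖) :
    ∀ k : ℕ, 2 + 4 ^ k * (‖w‖ - 2) ≤ ‖(fc c)^[k] w‖ := by
  intro k
  induction k with
  | zero => simp
  | succ k ih =>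
    rw [Function.iterate_succ_apply']
    set u := (fc c)^[k] w with hu
    have hd : 0 < ‖w‖ - 2 := by linarith
    have hpk : (1 : ℝ) ≤ 4 ^ k := one_le_pow₀ (by norm_num)
    have h2 : (2 : ℝ) + 4 ^ k * (‖w‖ - 2) ≤ ‖u‖ := ih
    have habs : ‖u‖ ^ 2 - ‖c‖ ≤ ‖fc c u‖ := by
      have h1 := norm_add_le (u ^ 2 + c) (-c)
      simp only [add_neg_cancel_right, norm_neg, norm_pow] at h1
      simp only [fc]
      linarith
    have : ‖u‖ ^ 2 - 2 ≤ ‖fc c u‖ := by linarith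
    have hpk4 : (4 : ℝ) ^ (k + 1) = 4 * 4 ^ k := by ring
    nlinarith [sq_nonneg (‖u‖ - 2), sq_nonneg (4 ^ k * (‖w‖ - 2))]

/-- Correctness of the bailout test with escape radius 2: for `|c| ≤ 2`,
the orbit of `z` under `f_c` is bounded iff every iterate has modulus `≤ 2`. -/
theorem orbit_bounded_iff_le_two (c : ℂ) (hc : ‖c‖ ≤ 2) (z : ℂ) :
    (∃ M : ℝ, ∀ n : ℕ, ‖(fc c)^[n] z‖ ≤ M) ↔
    (∀ n : ℕ, ‖(fc c)^[n] z‖ ≤ 2) := by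
  constructor
  · rintro ⟨M, hM⟩ n
    by_contra hgt
    push_neg at hgt
    set w := (fc c)^[n] z with hw
    have hd : 0 < ‖w‖ - 2 := by linarith
    obtain ⟨k, hk⟩ := pow_unbounded_of_one_lt (M / (‖w‖ - 2)) (by norm_num : (1:ℝ) < 4)
    have hk' : M < 4 ^ k * (‖w‖ - 2) := by
      rw [div_lt_iff₀ hd] at hk; linarith
    have hgrow := fc_grow c hc w hgt k
    have : (fc c)^[k] w = (fc c)^[n + k] z := by
      rw [Nat.add_comm, Function.iterate_add_apply]
    rw [this] at hgrow
    have := hM (n + k)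
    linarith
  · intro h
    exact ⟨2, h⟩
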